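/- Let C be a convex polygon in the plane all of whose vertices are points of the integer lattice ℤ², and let D ≥ 1 be its diameter. Then the number of vertices of C is at most 6·2^(1/3)·D^(2/3). -/

import Mathlib

noncomputable def latticeEmbed (z : ℤ × ℤ) : EuclideanSpace ℝ (Fin 2) :=
  (EuclideanSpace.equiv (Fin 2) ℝ).symm ![(z.1 : ℝ), (z.2 : ℝ)]

lemma latticeEmbed_inj : Function.Injective latticeEmbed := by
  intro a b h
  have h0 : (a.1:ℝ) = b.1 := congrArg (fun x => x 0) h
  have h1 : (a.2:ℝ) = b.2 := congrArg (fun x => x 1) h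
  exact Prod.ext (by exact_mod_cast h0) (by exact_mod_cast h1)

lemma coord_dist_le (x y : EuclideanSpace ℝ (Fin 2)) (i : Fin 2) : |x i - y i| ≤ dist x y := by
  rw [EuclideanSpace.dist_eq, ← Real.sqrt_sq_eq_abs]
  apply Real.sqrt_le_sqrt
  have := Finset.single_le_sum (f := fun j => dist (x j) (y j) ^ 2) (fun j _ => sq_nonneg _) (Finset.mem_univ i)
  simpa [Real.dist_eq, sq_abs] using this

lemma pt_ext (x y : EuclideanSpace ℝ (Fin 2)) (h0 : x 0 = y 0) (h1 : x 1 = y 1) : x = y := by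
  ext i
  fin_cases i <;> assumption


-- chain lemma for strictly decreasing slopes
lemma chain_lt (f : ℕ → ℝ) (m : ℕ) (h : ∀ i, i+1 < m → f (i+1) < f i) :
    ∀ i j, i < j → j < m → f j < f i := by
  intro i j
  induction j with
  | zero => omega
  | succ n ih =>
    intro hij hjm
    rcases Nat.lt_or_ge i n with h'|h'
    · exact (h n hjm).trans (ih h' (by omega))
    · have : i = n := by omega
      rw [this]; exact h n hjm


lemma sum_odd (s : ℕ) : ∑ j ∈ Finset.range s, (2*j+1) = s^2 := by
  induction s with
  | zero => simp
  | succ n ih => rw [Finset.sum_range_succ, ih]; ring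

lemma sum_sq_real (T : ℕ) : ∑ s ∈ Finset.range T, (s:ℝ)^2 = (2*(T:ℝ)^3 - 3*(T:ℝ)^2 + T)/6 := by
  induction T with
  | zero => simp
  | succ n ih => rw [Finset.sum_range_succ, ih]; push_cast; ring

-- the bucket finset
noncomputable def bucket (s : ℕ) : Finset (ℤ × ℤ) :=
  (Finset.range s).biUnion (fun j => (Finset.Icc (-(j:ℤ)) j).image (fun b => ((s:ℤ) - j, b)))

lemma bucket_card (s : ℕ) : (bucket s).card = s^2 := by
  rw [bucket, Finset.card_biUnion]
  · rw [← sum_odd s]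
    apply Finset.sum_congr rfl
    intro j _
    rw [Finset.card_image_of_injective _ (fun x y h => by simpa using h)]
    rw [Int.card_Icc]
    omega
  · intro i _ j _ hij
    simp only [Finset.disjoint_left, Finset.mem_image, Finset.mem_Icc]
    rintro p ⟨b, hb, rfl⟩ ⟨b', hb', hp⟩
    have := congrArg Prod.fst hp
    simp at this
    omega

lemma mem_bucket (s : ℕ) (a b : ℤ) (ha : 1 ≤ a) (hn : a + |b| ≤ s) : (a, b) ∈ bucket s := by
  have hb : |b| ≤ (s:ℤ) - a := by omega
  have hs : a ≤ s := by have := abs_nonneg b; omega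
  refine Finset.mem_biUnion.2 ⟨((s:ℤ) - a).toNat, ?_, ?_⟩
  · simp only [Finset.mem_range]; omega
  · refine Finset.mem_image.2 ⟨b, ?_, ?_⟩
    · simp only [Finset.mem_Icc]
      rw [abs_le] at hb; constructor <;> omega
    · have : (s:ℤ) - (((s:ℤ) - a).toNat : ℤ) = a := by omega
      rw [this]

-- min counting identity
lemma min_count (T : ℕ) (c : ℤ) (hc : 0 ≤ c) :
    ∑ s ∈ Finset.range T, (if (s:ℤ) < c then (1:ℤ) else 0) = min c T := by
  rw [Finset.sum_boole]
  have : (Finset.range T).filter (fun (s : ℕ) => ((s:ℤ) < c)) = Finset.range (min c.toNat T) := by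
    ext s
    simp only [Finset.mem_filter, Finset.mem_range, lt_min_iff]
    omega
  rw [this, Finset.card_range]
  push_cast
  omega
lemma count_bound (m : ℕ) (a b : ℕ → ℤ) (ha : ∀ i < m, 1 ≤ a i)
    (hdist : ∀ i j, i < m → j < m → i ≠ j → (a i, b i) ≠ (a j, b j)) (T : ℕ) :
    ∑ s ∈ Finset.range T, ((m:ℤ) - (s:ℤ)^2) ≤ ∑ i ∈ Finset.range m, (a i + |b i|) := by
  set n : ℕ → ℤ := fun i => a i + |b i| with hn
  have hn0 : ∀ i < m, 0 ≤ n i := fun i hi => by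
    have := ha i hi; have := abs_nonneg (b i); simp only [hn]; omega
  -- step A
  have stepA : ∀ s : ℕ, ((Finset.range m).filter (fun i => n i ≤ s)).card ≤ s^2 := by
    intro s
    rw [← bucket_card s]
    apply Finset.card_le_card_of_injOn (fun i => (a i, b i))
    · intro i hi
      simp only [Finset.mem_coe, Finset.mem_filter, Finset.mem_range] at hi
      exact mem_bucket s (a i) (b i) (ha i hi.1) hi.2
    · intro i hi j hj hij
      simp only [Finset.mem_coe, Finset.mem_filter, Finset.mem_range] at hi hj
      by_contra hne
      exact hdist i j hi.1 hj.1 hne hij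
  -- step B
  have key : ∑ i ∈ Finset.range m, min (n i) (T:ℤ) ≥ ∑ s ∈ Finset.range T, ((m:ℤ) - (s:ℤ)^2) := by
    have e1 : ∑ i ∈ Finset.range m, min (n i) (T:ℤ)
        = ∑ i ∈ Finset.range m, ∑ s ∈ Finset.range T, (if (s:ℤ) < n i then (1:ℤ) else 0) := by
      apply Finset.sum_congr rfl
      intro i hi
      rw [min_count T (n i) (hn0 i (Finset.mem_range.1 hi))]
    rw [e1, Finset.sum_comm]
    apply Finset.sum_le_sum
    intro s _
    have e2 : ∑ i ∈ Finset.range m, (if (s:ℤ) < n i then (1:ℤ) else 0)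
        = ((Finset.range m).filter (fun i => (s:ℤ) < n i)).card := by
      rw [Finset.sum_boole]
    rw [e2]
    have e3 := Finset.card_filter_add_card_filter_not
      (s := Finset.range m) (p := fun i => (s:ℤ) < n i)
    have e4 : ((Finset.range m).filter (fun i => ¬ (s:ℤ) < n i)).card
        = ((Finset.range m).filter (fun i => n i ≤ s)).card := by
      congr 1
      apply Finset.filter_congr
      intro i _
      simp [not_lt]
    have := stepA s
    rw [Finset.card_range] at e3
    rw [e4] at e3
    have h5 : (s^2 : ℤ) = ((s^2 : ℕ) : ℤ) := by push_cast; ring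
    rw [h5]
    have := stepA s
    omega
  calc ∑ s ∈ Finset.range T, ((m:ℤ) - (s:ℤ)^2) ≤ ∑ i ∈ Finset.range m, min (n i) (T:ℤ) := key
    _ ≤ ∑ i ∈ Finset.range m, n i := Finset.sum_le_sum (fun i _ => min_le_left _ _)
lemma polykey (r e : ℝ) (hr1 : 1 ≤ r) (he0 : 0 ≤ e) (he2 : e ≤ 2*r) (hm : 3 ≤ r^2 + e) :
    (r^2 + e + 1)^3 ≤ (r+1)^2 * (4*r^2 - r + 6*e)^2 / 6 := by
  nlinarith [sq_nonneg (r-1), sq_nonneg e, sq_nonneg (e - 2*r), mul_nonneg he0 (sq_nonneg r),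
    mul_nonneg (mul_nonneg he0 he0) he0, sq_nonneg (r*e), mul_nonneg he0 (sub_nonneg.2 hr1),
    mul_nonneg (sub_nonneg.2 he2) (sq_nonneg r), sq_nonneg (r^2 - e), mul_pos (lt_of_lt_of_le one_pos hr1) (lt_of_lt_of_le one_pos hr1)]

lemma lemB (m : ℕ) (D : ℝ) (hD : 1 ≤ D) (hm : 3 ≤ m)
    (H : ((∑ s ∈ Finset.range (Nat.sqrt m + 1), ((m:ℤ) - (s:ℤ)^2) : ℤ) : ℝ) ≤ 3 * D) :
    ((m:ℝ)+1)^3 ≤ 54 * D^2 := by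
  set T : ℕ := Nat.sqrt m + 1 with hT
  have hsum : ((∑ s ∈ Finset.range T, ((m:ℤ) - (s:ℤ)^2) : ℤ) : ℝ)
      = (m:ℝ) * T - (2*(T:ℝ)^3 - 3*(T:ℝ)^2 + T)/6 := by
    push_cast
    rw [Finset.sum_sub_distrib, Finset.sum_const, Finset.card_range, sum_sq_real]
    push_cast; ring
  rw [hsum] at H
  set r : ℝ := (Nat.sqrt m : ℝ) with hr
  have hTr : (T:ℝ) = r + 1 := by rw [hT]; push_cast; ring
  have h1n : Nat.sqrt m ^ 2 ≤ m := Nat.sqrt_le' m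
  have h1 : r^2 ≤ (m:ℝ) := by rw [hr]; exact_mod_cast h1n
  have h2n : m < (Nat.sqrt m).succ ^ 2 := Nat.lt_succ_sqrt' m
  have h2e : (Nat.sqrt m).succ ^ 2 = Nat.sqrt m ^ 2 + 2 * Nat.sqrt m + 1 := by
    rw [Nat.succ_eq_add_one]; ring
  have h2 : (m:ℝ) ≤ r^2 + 2*r := by
    rw [hr]
    have : m ≤ Nat.sqrt m ^ 2 + 2 * Nat.sqrt m := by omega
    exact_mod_cast this
  have hr1 : 1 ≤ r := by
    have : 1 ≤ Nat.sqrt m := by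
      rw [Nat.le_sqrt]; omega
    rw [hr]; exact_mod_cast this
  have hm3 : (3:ℝ) ≤ (m:ℝ) := by exact_mod_cast hm
  rw [hTr] at H
  set e : ℝ := (m:ℝ) - r^2 with he
  have he0 : 0 ≤ e := by linarith
  have he2 : e ≤ 2*r := by linarith
  have hme : (m:ℝ) = r^2 + e := by linarith
  have hbr : (m:ℝ) * (r+1) - (2*(r+1)^3 - 3*(r+1)^2 + (r+1))/6 = (r+1) * (4*r^2 - r + 6*e) / 6 := by
    rw [hme]; ring
  rw [hbr] at H
  have hq : 0 ≤ 4*r^2 - r + 6*e := by nlinarith [sq_nonneg r]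
  have hBnn : 0 ≤ (r+1) * (4*r^2 - r + 6*e) / 6 := by
    exact div_nonneg (mul_nonneg (by linarith : (0:ℝ) ≤ r + 1) hq) (by norm_num)
  have key : (r^2 + e + 1)^3 ≤ (r+1)^2 * (4*r^2 - r + 6*e)^2 / 6 :=
    polykey r e hr1 he0 he2 (by linarith)
  have hD2 : ((r+1) * (4*r^2 - r + 6*e) / 6)^2 ≤ (3*D)^2 := pow_le_pow_left₀ hBnn H 2
  rw [hme]
  calc ((r^2+e:ℝ)+1)^3 ≤ (r+1)^2 * (4*r^2 - r + 6*e)^2 / 6 := key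
    _ = 6 * ((r+1) * (4*r^2 - r + 6*e) / 6)^2 := by ring
    _ ≤ 6 * (3*D)^2 := by linarith
    _ = 54 * D^2 := by ring
lemma num (U : Finset (ℤ × ℤ)) (D : ℝ) (hD1 : 1 ≤ D)
    (hinj : ∀ z ∈ U, ∀ w ∈ U, z.1 = w.1 → z = w)
    (hconc : ∀ z1 ∈ U, ∀ z2 ∈ U, ∀ z3 ∈ U, z1.1 < z2.1 → z2.1 < z3.1 →
      (z3.1 - z2.1) * (z2.2 - z1.2) > (z2.1 - z1.1) * (z3.2 - z2.2))
    (hdiam : ∀ z ∈ U, ∀ w ∈ U, |((z.1:ℝ) - w.1)| ≤ D ∧ |((z.2:ℝ) - w.2)| ≤ D) :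
    ((U.card : ℝ))^3 ≤ 54 * D^2 := by
  by_cases hk4 : U.card ≤ 3
  · have h1 : (U.card:ℝ) ≤ 3 := by exact_mod_cast hk4
    have h0 : (0:ℝ) ≤ (U.card:ℝ) := by positivity
    have h2 : (U.card:ℝ)^3 ≤ 27 := by
      have := pow_le_pow_left₀ h0 h1 3
      norm_num at this
      linarith
    nlinarith [hD1]
  push_neg at hk4
  set k := U.card with hk
  have hkpos : 0 < k := by omega
  set X : Finset ℤ := U.image Prod.fst with hX
  have hXcard : X.card = k := by
    rw [hX, hk]
    exact Finset.card_image_of_injOn (fun z hz w hw h => hinj z hz w hw h)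
  set F := X.orderIsoOfFin hXcard with hF
  have hex : ∀ i : Fin k, ∃ z, z ∈ U ∧ z.1 = (F i : ℤ) := by
    intro i
    rcases Finset.mem_image.1 (F i).2 with ⟨z, hz, hzx⟩
    exact ⟨z, hz, hzx⟩
  choose uu huU hux using hex
  set w : ℕ → ℤ × ℤ := fun i => if h : i < k then uu ⟨i, h⟩ else uu ⟨0, hkpos⟩ with hw
  have hwU : ∀ i, i < k → w i ∈ U := by
    intro i hi
    have e : w i = uu ⟨i, hi⟩ := dif_pos hi
    rw [e]; exact huU _
  have hwx : ∀ i j, i < j → j < k → (w i).1 < (w j).1 := by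
    intro i j hij hj
    have hi : i < k := by omega
    have ei : w i = uu ⟨i, hi⟩ := dif_pos hi
    have ej : w j = uu ⟨j, hj⟩ := dif_pos hj
    rw [ei, ej, hux, hux]
    have : F ⟨i, hi⟩ < F ⟨j, hj⟩ := (OrderIso.lt_iff_lt F).2 (Fin.mk_lt_mk.2 hij)
    exact_mod_cast this
  set m := k - 1 with hm
  have hmk : m + 1 = k := by omega
  have hm3 : 3 ≤ m := by omega
  set a : ℕ → ℤ := fun i => (w (i+1)).1 - (w i).1 with haDef
  set b : ℕ → ℤ := fun i => (w (i+1)).2 - (w i).2 with hbDef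
  have haEq : ∀ i, a i = (w (i+1)).1 - (w i).1 := fun i => rfl
  have hbEq : ∀ i, b i = (w (i+1)).2 - (w i).2 := fun i => rfl
  have ha : ∀ i < m, 1 ≤ a i := by
    intro i hi
    have := hwx i (i+1) (by omega) (by omega)
    rw [haEq]; omega
  have hapos : ∀ i < m, (0:ℝ) < (a i : ℝ) := by
    intro i hi
    have := ha i hi
    exact_mod_cast (by omega : (0:ℤ) < a i)
  have hcross : ∀ i, i+1 < m → a i * b (i+1) < a (i+1) * b i := by
    intro i hi
    have := hconc (w i) (hwU i (by omega)) (w (i+1)) (hwU (i+1) (by omega))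
      (w (i+2)) (hwU (i+2) (by omega)) (hwx i (i+1) (by omega) (by omega))
      (hwx (i+1) (i+2) (by omega) (by omega))
    rw [haEq, haEq, hbEq, hbEq]
    exact this
  set s : ℕ → ℝ := fun i => (b i : ℝ) / (a i) with hsDef
  have hsEq : ∀ i, s i = (b i : ℝ) / (a i) := fun i => rfl
  have hs : ∀ i, i+1 < m → s (i+1) < s i := by
    intro i hi
    rw [hsEq, hsEq, div_lt_div_iff₀ (hapos (i+1) (by omega)) (hapos i (by omega))]
    have h := hcross i hi
    exact_mod_cast (by linarith : (b (i+1)) * (a i) < (b i) * (a (i+1)))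
  have hanti := chain_lt s m hs
  have hdist : ∀ i j, i < m → j < m → i ≠ j → (a i, b i) ≠ (a j, b j) := by
    intro i j hi hj hij heq
    have e1 : a i = a j := congrArg Prod.fst heq
    have e2 : b i = b j := congrArg Prod.snd heq
    have hss : s i = s j := by rw [hsEq, hsEq, e1, e2]
    rcases Nat.lt_or_ge i j with h|h
    · exact absurd hss (ne_of_gt (hanti i j h hj))
    · exact absurd hss (ne_of_lt (hanti j i (by omega) hi))
  have tel_a : ∑ i ∈ Finset.range m, a i = (w m).1 - (w 0).1 :=
    Finset.sum_range_sub (fun i => (w i).1) m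
  have tel_b : ∀ q, ∑ i ∈ Finset.range q, b i = (w q).2 - (w 0).2 := fun q =>
    Finset.sum_range_sub (fun i => (w i).2) q
  have ydiff : ∀ i j, i < k → j < k → ((w i).2 : ℝ) - ((w j).2 : ℝ) ≤ D := by
    intro i j hi hj
    have h := abs_le.1 (hdiam (w i) (hwU i hi) (w j) (hwU j hj)).2
    linarith [h.1, h.2]
  have xdiff : ((w m).1 : ℝ) - ((w 0).1 : ℝ) ≤ D := by
    have h := abs_le.1 (hdiam (w m) (hwU m (by omega)) (w 0) (hwU 0 (by omega))).1
    linarith [h.1, h.2]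
  -- prefix p for the sign split of b
  have habs_bound : ((∑ i ∈ Finset.range m, |b i| : ℤ) : ℝ) ≤ 2 * D := by
    by_cases hPex : ∃ i, i < m ∧ b i < 0
    · set p := Nat.find hPex with hp
      have hspec := Nat.find_spec hPex
      have hpm : p ≤ m := by omega
      have h_pre : ∀ i, i < p → 0 ≤ b i := by
        intro i hip
        have := Nat.find_min hPex hip
        push_neg at this
        rcases Nat.lt_or_ge i m with h'|h'
        · exact this h'
        · omega
      have h_suf : ∀ i, p ≤ i → i < m → b i < 0 := by
        intro i hpi him
        rcases Nat.eq_or_lt_of_le hpi with h'|h'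
        · rw [← h']; exact hspec.2
        · have hsp : s p < 0 := by
            rw [hsEq]
            apply div_neg_of_neg_of_pos _ (hapos p (by omega))
            exact_mod_cast hspec.2
          have : s i < s p := hanti p i h' him
          by_contra hx
          push_neg at hx
          have : (0:ℝ) ≤ s i := by
            rw [hsEq]
            apply div_nonneg _ (le_of_lt (hapos i him))
            exact_mod_cast hx
          linarith
      have split : ∑ i ∈ Finset.range m, |b i|
          = ∑ i ∈ Finset.range p, b i + ∑ i ∈ Finset.Ico p m, (-(b i)) := by
        rw [Finset.range_eq_Ico, ← Finset.sum_Ico_consecutive _ (Nat.zero_le p) hpm,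
          ← Finset.range_eq_Ico]
        congr 1
        · exact Finset.sum_congr rfl (fun i hi => abs_of_nonneg (h_pre i (Finset.mem_range.1 hi)))
        · refine Finset.sum_congr rfl (fun i hi => ?_)
          have hi' := Finset.mem_Ico.1 hi
          exact abs_of_neg (h_suf i hi'.1 hi'.2)
      have sum_Ico_b : ∑ i ∈ Finset.Ico p m, b i = (w m).2 - (w p).2 := by
        have := Finset.sum_Ico_consecutive (fun i => b i) (Nat.zero_le p) hpm
        simp only [← Finset.range_eq_Ico] at this
        have t1 := tel_b p
        have t2 := tel_b m
        omega
      have eq2 : ∑ i ∈ Finset.range m, |b i| = ((w p).2 - (w 0).2) + ((w p).2 - (w m).2) := by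
        rw [split, Finset.sum_neg_distrib, sum_Ico_b, tel_b p]; ring
      rw [eq2]
      push_cast
      have y1 := ydiff p 0 (by omega) (by omega)
      have y2 := ydiff p m (by omega) (by omega)
      linarith
    · push_neg at hPex
      have habs : ∑ i ∈ Finset.range m, |b i| = ∑ i ∈ Finset.range m, b i :=
        Finset.sum_congr rfl (fun i hi => abs_of_nonneg (hPex i (Finset.mem_range.1 hi)))
      rw [habs, tel_b m]
      have := ydiff m 0 (by omega) (by omega)
      push_cast
      push_cast at this
      linarith [hD1]
  -- combine with a-sum
  have hsumN : ((∑ i ∈ Finset.range m, (a i + |b i|) : ℤ) : ℝ) ≤ 3 * D := by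
    rw [Finset.sum_add_distrib]
    push_cast
    have h1 : ((∑ i ∈ Finset.range m, a i : ℤ) : ℝ) ≤ D := by rw [tel_a]; push_cast; linarith [xdiff]
    push_cast at h1 habs_bound
    linarith
  have H := count_bound m a b ha hdist (Nat.sqrt m + 1)
  have H' : ((∑ s ∈ Finset.range (Nat.sqrt m + 1), ((m:ℤ) - (s:ℤ)^2) : ℤ) : ℝ) ≤ 3 * D := by
    calc ((∑ s ∈ Finset.range (Nat.sqrt m + 1), ((m:ℤ) - (s:ℤ)^2) : ℤ) : ℝ)
        ≤ ((∑ i ∈ Finset.range m, (a i + |b i|) : ℤ) : ℝ) := by exact_mod_cast H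
      _ ≤ 3 * D := hsumN
  have := lemB m D hD1 hm3 H'
  have : ((k:ℝ))^3 ≤ 54 * D^2 := by
    have e : (k:ℝ) = (m:ℝ) + 1 := by exact_mod_cast (by omega : (k:ℤ) = (m:ℤ) + 1)
    rw [e]; exact this
  exact_mod_cast this
-- vertical betweenness kills extremeness
lemma vert_extreme (C : Set (EuclideanSpace ℝ (Fin 2))) (v c c' : EuclideanSpace ℝ (Fin 2))
    (hv : v ∈ Set.extremePoints ℝ C) (hc : c ∈ C) (hc' : c' ∈ C)
    (hx : c 0 = v 0) (hx' : c' 0 = v 0) (hy : v 1 < c 1) (hy' : c' 1 < v 1) : False := by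
  set α : ℝ := (v 1 - c' 1) / (c 1 - c' 1) with hα
  have hden : 0 < c 1 - c' 1 := by linarith
  have hα0 : 0 < α := by apply div_pos <;> linarith
  have hα1 : α < 1 := by rw [hα, div_lt_one hden]; linarith
  have hmem : v ∈ openSegment ℝ c c' := by
    refine ⟨α, 1 - α, hα0, by linarith, by ring, ?_⟩
    apply pt_ext
    · show α * c 0 + (1-α) * c' 0 = v 0
      rw [hx, hx']; ring
    · show α * c 1 + (1-α) * c' 1 = v 1
      rw [hα]; field_simp; ring
  have := ((mem_extremePoints.1 hv).2 c hc c' hc' hmem).1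
  rw [this] at hy
  exact lt_irrefl _ hy

-- strict chord inequality for "upper" extreme points
lemma chord_lt (C : Set (EuclideanSpace ℝ (Fin 2))) (hconv : Convex ℝ C)
    (P1 P2 P3 : EuclideanSpace ℝ (Fin 2)) (h1 : P1 ∈ C) (h3 : P3 ∈ C)
    (hE : P2 ∈ Set.extremePoints ℝ C)
    (hx : P1 0 < P2 0) (hx' : P2 0 < P3 0)
    (hup : ∀ c ∈ C, c 0 = P2 0 → c 1 ≤ P2 1) :
    (P3 0 - P2 0) * (P2 1 - P1 1) > (P2 0 - P1 0) * (P3 1 - P2 1) := by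
  set t : ℝ := (P3 0 - P2 0) / (P3 0 - P1 0) with ht
  have hden : 0 < P3 0 - P1 0 := by linarith
  have ht0 : 0 < t := by apply div_pos <;> linarith
  have ht1 : t < 1 := by rw [ht, div_lt_one hden]; linarith
  set q : EuclideanSpace ℝ (Fin 2) := t • P1 + (1 - t) • P3 with hq
  have hqC : q ∈ C := hconv h1 h3 (le_of_lt ht0) (by linarith) (by ring)
  have hq0 : q 0 = P2 0 := by
    show t * P1 0 + (1 - t) * P3 0 = P2 0
    rw [ht]; field_simp; ring
  have hq1 : q 1 = t * P1 1 + (1 - t) * P3 1 := rfl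
  have hle : q 1 ≤ P2 1 := hup q hqC hq0
  have hne : q 1 ≠ P2 1 := by
    intro heq
    have hqP2 : q = P2 := pt_ext q P2 hq0 heq
    have hmem : P2 ∈ openSegment ℝ P1 P3 := by
      refine ⟨t, 1 - t, ht0, by linarith, by ring, ?_⟩
      rw [← hq, hqP2]
    have := ((mem_extremePoints.1 hE).2 P1 h1 P3 h3 hmem).1
    rw [this] at hx
    exact lt_irrefl _ hx
  have hlt : t * P1 1 + (1 - t) * P3 1 < P2 1 := lt_of_le_of_ne (hq1 ▸ hle) (hq1 ▸ hne)
  have hmul : (P3 0 - P2 0) * P1 1 + (P2 0 - P1 0) * P3 1 < (P3 0 - P1 0) * P2 1 := by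
    have h2 := mul_lt_mul_of_pos_left hlt hden
    rw [ht] at h2
    field_simp at h2
    nlinarith [h2]
  nlinarith [hmul]

lemma chord_gt (C : Set (EuclideanSpace ℝ (Fin 2))) (hconv : Convex ℝ C)
    (P1 P2 P3 : EuclideanSpace ℝ (Fin 2)) (h1 : P1 ∈ C) (h3 : P3 ∈ C)
    (hE : P2 ∈ Set.extremePoints ℝ C)
    (hx : P1 0 < P2 0) (hx' : P2 0 < P3 0)
    (hlo : ∀ c ∈ C, c 0 = P2 0 → P2 1 ≤ c 1) :
    (P3 0 - P2 0) * (P2 1 - P1 1) < (P2 0 - P1 0) * (P3 1 - P2 1) := by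
  set t : ℝ := (P3 0 - P2 0) / (P3 0 - P1 0) with ht
  have hden : 0 < P3 0 - P1 0 := by linarith
  have ht0 : 0 < t := by apply div_pos <;> linarith
  have ht1 : t < 1 := by rw [ht, div_lt_one hden]; linarith
  set q : EuclideanSpace ℝ (Fin 2) := t • P1 + (1 - t) • P3 with hq
  have hqC : q ∈ C := hconv h1 h3 (le_of_lt ht0) (by linarith) (by ring)
  have hq0 : q 0 = P2 0 := by
    show t * P1 0 + (1 - t) * P3 0 = P2 0
    rw [ht]; field_simp; ring
  have hq1 : q 1 = t * P1 1 + (1 - t) * P3 1 := rfl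
  have hle : P2 1 ≤ q 1 := hlo q hqC hq0
  have hne : q 1 ≠ P2 1 := by
    intro heq
    have hqP2 : q = P2 := pt_ext q P2 hq0 heq
    have hmem : P2 ∈ openSegment ℝ P1 P3 := by
      refine ⟨t, 1 - t, ht0, by linarith, by ring, ?_⟩
      rw [← hq, hqP2]
    have := ((mem_extremePoints.1 hE).2 P1 h1 P3 h3 hmem).1
    rw [this] at hx
    exact lt_irrefl _ hx
  have hlt : P2 1 < t * P1 1 + (1 - t) * P3 1 := lt_of_le_of_ne (hq1 ▸ hle) (fun h => hne (hq1 ▸ h.symm))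
  have hmul : (P3 0 - P1 0) * P2 1 < (P3 0 - P2 0) * P1 1 + (P2 0 - P1 0) * P3 1 := by
    have h2 := mul_lt_mul_of_pos_left hlt hden
    rw [ht] at h2
    field_simp at h2
    nlinarith [h2]
  nlinarith [hmul]

theorem stmt0 (S : Finset (ℤ × ℤ)) (hS : S.Nonempty)
    (C : Set (EuclideanSpace ℝ (Fin 2)))
    (hC : C = convexHull ℝ (latticeEmbed '' (S : Set (ℤ × ℤ))))
    (D : ℝ) (hD : D = Metric.diam C) (hD1 : 1 ≤ D) :
    ((Set.extremePoints ℝ C).ncard : ℝ) ≤ 6 * (2 : ℝ) ^ ((1:ℝ)/3) * D ^ ((2:ℝ)/3) := by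
  classical
  set E : Set (EuclideanSpace ℝ (Fin 2)) := Set.extremePoints ℝ C with hE
  have hD0 : (0:ℝ) < D := lt_of_lt_of_le one_pos hD1
  -- basics about C
  have hconv : Convex ℝ C := hC ▸ convex_convexHull ℝ _
  have hbdd : Bornology.IsBounded C := by
    rw [hC]
    exact ((S.finite_toSet.image _).isCompact_convexHull ℝ).isBounded
  have hdistD : ∀ p ∈ C, ∀ q ∈ C, dist p q ≤ D := by
    intro p hp q hq
    rw [hD]
    exact Metric.dist_le_diam_of_mem hbdd hp hq
  have hEsub : E ⊆ latticeEmbed '' (S : Set (ℤ × ℤ)) := by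
    rw [hE, hC]; exact extremePoints_convexHull_subset
  have hEC : E ⊆ C := extremePoints_subset
  -- lattice representation of E
  set W : Finset (ℤ × ℤ) := S.filter (fun z => latticeEmbed z ∈ E) with hW
  have hWE : ∀ z ∈ W, latticeEmbed z ∈ E := by
    intro z hz; exact (Finset.mem_filter.1 hz).2
  have hWC : ∀ z ∈ W, latticeEmbed z ∈ C := fun z hz => hEC (hWE z hz)
  have hEeq : E = latticeEmbed '' (W : Set (ℤ × ℤ)) := by
    apply Set.Subset.antisymm
    · intro v hv
      rcases hEsub hv with ⟨z, hzS, rfl⟩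
      exact ⟨z, Finset.mem_filter.2 ⟨hzS, hv⟩, rfl⟩
    · rintro v ⟨z, hz, rfl⟩
      exact hWE z hz
  have hncard : E.ncard = W.card := by
    rw [hEeq, Set.ncard_image_of_injective _ latticeEmbed_inj, Set.ncard_coe_finset]
  -- upper and lower point sets
  set Up : Finset (ℤ × ℤ) := W.filter (fun z => ∀ c ∈ C, c 0 = (z.1:ℝ) → c 1 ≤ (z.2:ℝ)) with hUp
  set Lo : Finset (ℤ × ℤ) := W.filter (fun z => ∀ c ∈ C, c 0 = (z.1:ℝ) → (z.2:ℝ) ≤ c 1) with hLo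
  have hcover : W ⊆ Up ∪ Lo := by
    intro z hz
    by_contra hnz
    rw [Finset.mem_union] at hnz
    push_neg at hnz
    have h1 : z ∉ Up := hnz.1
    have h2 : z ∉ Lo := hnz.2
    rw [hUp, Finset.mem_filter] at h1
    rw [hLo, Finset.mem_filter] at h2
    push_neg at h1 h2
    rcases h1 hz with ⟨c, hcC, hc0, hc1⟩
    rcases h2 hz with ⟨c', hc'C, hc'0, hc'1⟩
    exact vert_extreme C (latticeEmbed z) c c' (hWE z hz) hcC hc'C hc0 hc'0 hc1 hc'1
  have hcard : W.card ≤ Up.card + Lo.card :=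
    le_trans (Finset.card_le_card hcover) (Finset.card_union_le _ _)
  -- diameter bounds for lattice points of W
  have hdiamW : ∀ z ∈ W, ∀ w ∈ W, |((z.1:ℝ) - w.1)| ≤ D ∧ |((z.2:ℝ) - w.2)| ≤ D := by
    intro z hz w hw
    have h0 := (coord_dist_le (latticeEmbed z) (latticeEmbed w) 0).trans
      (hdistD _ (hWC z hz) _ (hWC w hw))
    have h1 := (coord_dist_le (latticeEmbed z) (latticeEmbed w) 1).trans
      (hdistD _ (hWC z hz) _ (hWC w hw))
    exact ⟨h0, h1⟩
  -- apply num to Up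
  have hUpcard : ((Up.card : ℝ))^3 ≤ 54 * D^2 := by
    apply num Up D hD1
    · intro z hz w hw hxy
      have hzW : z ∈ W := (Finset.mem_filter.1 hz).1
      have hwW : w ∈ W := (Finset.mem_filter.1 hw).1
      have hzup := (Finset.mem_filter.1 hz).2
      have hwup := (Finset.mem_filter.1 hw).2
      have e1 : (w.2:ℝ) ≤ (z.2:ℝ) := hzup (latticeEmbed w) (hWC w hwW) (by exact_mod_cast congrArg Int.cast hxy.symm)
      have e2 : (z.2:ℝ) ≤ (w.2:ℝ) := hwup (latticeEmbed z) (hWC z hzW) (by exact_mod_cast congrArg Int.cast hxy)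
      have : (z.2:ℝ) = w.2 := le_antisymm e2 e1
      exact Prod.ext hxy (by exact_mod_cast this)
    · intro z1 h1 z2 h2 z3 h3 h12 h23
      have hx12 : ((z1.1:ℝ)) < z2.1 := by exact_mod_cast h12
      have hx23 : ((z2.1:ℝ)) < z3.1 := by exact_mod_cast h23
      have key := chord_lt C hconv (latticeEmbed z1) (latticeEmbed z2) (latticeEmbed z3)
        (hWC z1 (Finset.mem_filter.1 h1).1) (hWC z3 (Finset.mem_filter.1 h3).1)
        (hWE z2 (Finset.mem_filter.1 h2).1) hx12 hx23
        (Finset.mem_filter.1 h2).2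
      have key' : ((z3.1:ℝ) - z2.1) * ((z2.2:ℝ) - z1.2) > ((z2.1:ℝ) - z1.1) * ((z3.2:ℝ) - z2.2) := key
      exact_mod_cast key'
    · intro z hz w hw
      exact hdiamW z (Finset.mem_filter.1 hz).1 w (Finset.mem_filter.1 hw).1
  -- apply num to reflected Lo
  have hLocard : ((Lo.card : ℝ))^3 ≤ 54 * D^2 := by
    set Lo' : Finset (ℤ × ℤ) := Lo.image (fun z => (z.1, -z.2)) with hLo'
    have hrefl_inj : Function.Injective (fun z : ℤ × ℤ => (z.1, -z.2)) := by
      intro x y h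
      simp only [Prod.mk.injEq] at h
      exact Prod.ext h.1 (by omega)
    have hcards : Lo'.card = Lo.card := Finset.card_image_of_injective _ hrefl_inj
    rw [← hcards]
    apply num Lo' D hD1
    · intro z hz w hw hxy
      rcases Finset.mem_image.1 hz with ⟨z0, hz0, rfl⟩
      rcases Finset.mem_image.1 hw with ⟨w0, hw0, rfl⟩
      simp only at hxy ⊢
      have hz0W : z0 ∈ W := (Finset.mem_filter.1 hz0).1
      have hw0W : w0 ∈ W := (Finset.mem_filter.1 hw0).1
      have hzlo := (Finset.mem_filter.1 hz0).2
      have hwlo := (Finset.mem_filter.1 hw0).2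
      have e1 : (z0.2:ℝ) ≤ (w0.2:ℝ) := hzlo (latticeEmbed w0) (hWC w0 hw0W) (by exact_mod_cast congrArg Int.cast hxy.symm)
      have e2 : (w0.2:ℝ) ≤ (z0.2:ℝ) := hwlo (latticeEmbed z0) (hWC z0 hz0W) (by exact_mod_cast congrArg Int.cast hxy)
      have : (z0.2:ℝ) = w0.2 := le_antisymm e1 e2
      have : z0.2 = w0.2 := by exact_mod_cast this
      rw [hxy, this]
    · intro z1' h1 z2' h2 z3' h3 h12 h23
      rcases Finset.mem_image.1 h1 with ⟨z1, hz1, rfl⟩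
      rcases Finset.mem_image.1 h2 with ⟨z2, hz2, rfl⟩
      rcases Finset.mem_image.1 h3 with ⟨z3, hz3, rfl⟩
      simp only at h12 h23 ⊢
      have hx12 : ((z1.1:ℝ)) < z2.1 := by exact_mod_cast h12
      have hx23 : ((z2.1:ℝ)) < z3.1 := by exact_mod_cast h23
      have key := chord_gt C hconv (latticeEmbed z1) (latticeEmbed z2) (latticeEmbed z3)
        (hWC z1 (Finset.mem_filter.1 hz1).1) (hWC z3 (Finset.mem_filter.1 hz3).1)
        (hWE z2 (Finset.mem_filter.1 hz2).1) hx12 hx23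
        (Finset.mem_filter.1 hz2).2
      have key' : ((z3.1:ℝ) - z2.1) * ((z2.2:ℝ) - z1.2) < ((z2.1:ℝ) - z1.1) * ((z3.2:ℝ) - z2.2) := key
      have keyZ : (z3.1 - z2.1) * (z2.2 - z1.2) < (z2.1 - z1.1) * (z3.2 - z2.2) := by exact_mod_cast key'
      nlinarith [keyZ]
    · intro z hz w hw
      rcases Finset.mem_image.1 hz with ⟨z0, hz0, rfl⟩
      rcases Finset.mem_image.1 hw with ⟨w0, hw0, rfl⟩
      have := hdiamW z0 (Finset.mem_filter.1 hz0).1 w0 (Finset.mem_filter.1 hw0).1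
      simp only
      constructor
      · exact this.1
      · have h2 := this.2
        rw [show ((-z0.2:ℤ):ℝ) - ((-w0.2:ℤ):ℝ) = -(((z0.2:ℤ):ℝ) - ((w0.2:ℤ):ℝ)) by push_cast; ring, abs_neg]
        exact h2
  -- combine
  have hcube : ((E.ncard : ℝ))^3 ≤ 432 * D^2 := by
    have h1 : ((E.ncard : ℝ)) ≤ (Up.card : ℝ) + (Lo.card : ℝ) := by
      rw [hncard]; exact_mod_cast hcard
    have h2 : (0:ℝ) ≤ (Up.card : ℝ) := Nat.cast_nonneg _
    have h3 : (0:ℝ) ≤ (Lo.card : ℝ) := Nat.cast_nonneg _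
    have h4 : (0:ℝ) ≤ (E.ncard : ℝ) := by positivity
    have h5 : ((E.ncard : ℝ))^3 ≤ ((Up.card : ℝ) + (Lo.card : ℝ))^3 := pow_le_pow_left₀ h4 h1 3
    have h6 : ((Up.card : ℝ) + (Lo.card : ℝ))^3 ≤ 4 * (((Up.card : ℝ))^3 + ((Lo.card : ℝ))^3) := by
      nlinarith [mul_nonneg (add_nonneg h2 h3) (sq_nonneg ((Up.card:ℝ) - (Lo.card:ℝ)))]
    linarith [hUpcard, hLocard]
  -- final rpow arithmetic
  set R : ℝ := 6 * (2 : ℝ) ^ ((1:ℝ)/3) * D ^ ((2:ℝ)/3) with hR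
  have e1 : ((2:ℝ)^((1:ℝ)/3))^(3:ℕ) = 2 := by
    rw [← Real.rpow_natCast ((2:ℝ)^((1:ℝ)/3)) 3, ← Real.rpow_mul (by norm_num : (0:ℝ) ≤ 2)]
    norm_num
  have e2 : (D^((2:ℝ)/3))^(3:ℕ) = D^(2:ℕ) := by
    rw [← Real.rpow_natCast (D^((2:ℝ)/3)) 3, ← Real.rpow_mul hD0.le, ← Real.rpow_natCast D 2]
    norm_num
  have hR3 : R^3 = 432 * D^2 := by
    have : R^3 = 216 * ((2:ℝ)^((1:ℝ)/3))^(3:ℕ) * (D^((2:ℝ)/3))^(3:ℕ) := by rw [hR]; ring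
    rw [this, e1, e2]
    norm_num
  have hRpos : 0 ≤ R := by
    rw [hR]
    have : (0:ℝ) ≤ (2:ℝ)^((1:ℝ)/3) := Real.rpow_nonneg (by norm_num) _
    have : (0:ℝ) ≤ D^((2:ℝ)/3) := Real.rpow_nonneg hD0.le _
    positivity
  by_contra hcon
  push_neg at hcon
  have : R^3 < ((E.ncard:ℝ))^3 := by
    apply pow_lt_pow_left₀ hcon hRpos
    norm_num
  rw [hR3] at this
  linarith [hcube]
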